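/- arXiv:1103.3755 — 2 statements merged into one kernel-verified Lean document; each statement's English description precedes it below -/
import Mathlib

section
/- For all planar binary trees x ∈ Y_m and y ∈ Y_n, the map (x′, y′) ↦ x′/y′ is a bijection from {x′ ∈ Y_m : x′ ≤ x} × {y′ ∈ Y_n : y′ ≤ y} onto {z ∈ Y_{m+n} : z ≤ x/y}, where ≤ is the Tamari order. -/
/-- A planar binary tree: either the trivial tree (a leaf) or an ordered pair of
planar binary trees. -/
inductive PBT : Type
  | leaf : PBT
  | node : PBT → PBT → PBT
  deriving DecidableEq

namespace PBT

/-- Number of internal vertices of a planar binary tree. -/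
def size : PBT → ℕ
  | leaf => 0
  | node a b => a.size + b.size + 1

/-- One covering move of the Tamari order: `Rot x y` holds when `y` is obtained
from `x` by replacing some subtree of the form `((a,b),c)` by `(a,(b,c))`. -/
inductive Rot : PBT → PBT → Prop
  | rot (a b c : PBT) : Rot (node (node a b) c) (node a (node b c))
  | left {a a' : PBT} (b : PBT) : Rot a a' → Rot (node a b) (node a' b)
  | right (a : PBT) {b b' : PBT} : Rot b b' → Rot (node a b) (node a b')

/-- The Tamari order: reflexive-transitive closure of `Rot`. -/
def tle (x y : PBT) : Prop := Relation.ReflTransGen Rot x y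

/-- Grafting of `x` on the leftmost leaf of `y` : the operation `x / y`. -/
def over' : PBT → PBT → PBT
  | x, leaf => x
  | x, node y₁ y₂ => node (over' x y₁) y₂

/-- Grafting of `y` on the rightmost leaf of `x` : the operation `x ∖ y`. -/
def under : PBT → PBT → PBT
  | leaf, y => y
  | node x₁ x₂, y => node x₁ (under x₂ y)

theorem Rot.size_eq {x y : PBT} (h : Rot x y) : x.size = y.size := by
  induction h <;> simp [size] <;> omega

theorem tle.size_eq {x y : PBT} (h : tle x y) : x.size = y.size := by
  induction h with
  | refl => rfl
  | tail _ h ih => rw [ih, h.size_eq]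

theorem finite_size_le (n : ℕ) : {z : PBT | z.size ≤ n}.Finite := by
  induction n with
  | zero =>
    apply Set.Finite.subset (Set.finite_singleton leaf)
    rintro (_ | ⟨a, b⟩) hz
    · simp
    · simp [size] at hz
  | succ n ih =>
    apply Set.Finite.subset ((Set.Finite.image2 node ih ih).insert leaf)
    rintro (_ | ⟨a, b⟩) hz
    · simp
    · simp only [Set.mem_setOf_eq, size] at hz
      exact Set.mem_insert_iff.mpr
        (Or.inr (Set.mem_image2.mpr ⟨a, by simp only [Set.mem_setOf_eq]; omega, b, by simp only [Set.mem_setOf_eq]; omega, rfl⟩))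

theorem finite_size (n : ℕ) : {z : PBT | z.size = n}.Finite :=
  (finite_size_le n).subset fun _ hz => le_of_eq hz

theorem finite_tle_right (x : PBT) : {y : PBT | tle y x}.Finite :=
  (finite_size x.size).subset fun _ hy => hy.size_eq

theorem finite_tle_left (x : PBT) : {y : PBT | tle x y}.Finite :=
  (finite_size x.size).subset fun _ hy => hy.size_eq.symm

theorem finite_interval (x y : PBT) :
    {z : PBT | tle (over' x y) z ∧ tle z (under x y)}.Finite :=
  (finite_tle_right (under x y)).subset fun _ hz => hz.2

end PBT

/-- The free abelian group `ℤY = ⊕ₙ ℤYₙ` on the set of all planar binary trees. -/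
abbrev ZY : Type := PBT →₀ ℤ

namespace PBT

/-- The basis element `S_x` of `ℤY`. -/
noncomputable def S (x : PBT) : ZY := Finsupp.single x 1

/-- The class `P_x = ∑_{y ≤ x} S_y` of the projective module. -/
noncomputable def P (x : PBT) : ZY := ∑ y ∈ (finite_tle_right x).toFinset, S y

/-- The class `I_x = ∑_{y ≥ x} S_y` of the injective module. -/
noncomputable def I (x : PBT) : ZY := ∑ y ∈ (finite_tle_left x).toFinset, S y

/-- The Loday-Ronco product on basis elements:
`S_x * S_y = ∑_{x/y ≤ z ≤ x∖y} S_z`. -/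
noncomputable def starB (x y : PBT) : ZY := ∑ z ∈ (finite_interval x y).toFinset, S z

/-- Bilinear extension of a product defined on basis elements. -/
noncomputable def bilin (f : PBT → PBT → ZY) (a b : ZY) : ZY :=
  a.sum fun x ax => b.sum fun y byy => (ax * byy) • f x y

/-- The product `/` on `ℤY`, with `S_x / S_y = S_{x/y}`. -/
noncomputable def overM : ZY → ZY → ZY := bilin fun x y => S (x.over' y)

/-- The product `∖` on `ℤY`, with `S_x ∖ S_y = S_{x∖y}`. -/
noncomputable def underM : ZY → ZY → ZY := bilin fun x y => S (x.under y)

/-- The Loday-Ronco product `*` on `ℤY`. -/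
noncomputable def starM : ZY → ZY → ZY := bilin starB

/-- The unique planar binary tree `•` with one internal vertex. -/
def dot : PBT := node leaf leaf

end PBT

namespace PBT

theorem size_over (x y : PBT) : (x.over' y).size = x.size + y.size := by
  induction y with
  | leaf => simp [over', size]
  | node a b iha ihb => simp only [over', size, iha]; omega

theorem over_inj {x1 x2 y1 y2 : PBT} (hs : x1.size = x2.size)
    (h : x1.over' y1 = x2.over' y2) : x1 = x2 ∧ y1 = y2 := by
  induction y1 generalizing y2 with
  | leaf =>
    cases y2 with
    | leaf => exact ⟨h, rfl⟩
    | node c d =>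
      exfalso
      have := congrArg size h
      simp only [over', size_over, size] at this
      omega
  | node a b iha ihb =>
    cases y2 with
    | leaf =>
      exfalso
      have := congrArg size h
      simp only [over', size_over, size] at this
      omega
    | node c d =>
      simp only [over', node.injEq] at h
      obtain ⟨h1, h2⟩ := h
      obtain ⟨hx, hy⟩ := iha h1
      exact ⟨hx, by rw [hy, h2]⟩

theorem Rot.over_left {x x' : PBT} (h : Rot x x') (y : PBT) :
    Rot (x.over' y) (x'.over' y) := by
  induction y with
  | leaf => exact h
  | node a b iha ihb => exact Rot.left b iha

theorem Rot.over_right (x : PBT) {y y' : PBT} (h : Rot y y') :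
    Rot (x.over' y) (x.over' y') := by
  induction h with
  | rot a b c => exact Rot.rot (x.over' a) b c
  | left b hb ih => exact Rot.left b ih
  | right a hb ih => exact Rot.right (x.over' a) hb

theorem tle.over_mono {x x' y y' : PBT} (hx : tle x x') (hy : tle y y') :
    tle (x.over' y) (x'.over' y') := by
  have h1 : Relation.ReflTransGen Rot (x.over' y) (x'.over' y) :=
    Relation.ReflTransGen.lift (fun t : PBT => t.over' y) (fun _ _ (h : Rot _ _) => h.over_left y) _ _ hx
  have h2 : Relation.ReflTransGen Rot (x'.over' y) (x'.over' y') :=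
    Relation.ReflTransGen.lift (fun t => x'.over' t) (fun _ _ h => Rot.over_right x' h) _ _ hy
  exact h1.trans h2

theorem rot_over_decomp {z a b : PBT} (h : Rot z (a.over' b)) :
    ∃ a' b', z = a'.over' b' ∧ tle a' a ∧ tle b' b := by
  induction b generalizing z with
  | leaf => exact ⟨z, leaf, rfl, Relation.ReflTransGen.single h, Relation.ReflTransGen.refl⟩
  | node b1 b2 ih1 ih2 =>
    have h' : Rot z (node (a.over' b1) b2) := h
    cases h' with
    | rot p q r =>
      exact ⟨a, node (node b1 q) r, rfl, Relation.ReflTransGen.refl,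
        Relation.ReflTransGen.single (Rot.rot b1 q r)⟩
    | left _ hz =>
      obtain ⟨a', b1', rfl, ha, hb⟩ := ih1 hz
      refine ⟨a', node b1' b2, rfl, ha, ?_⟩
      exact (Relation.ReflTransGen.lift (fun t => node t b2) (fun _ _ h => Rot.left b2 h) _ _ hb :
        Relation.ReflTransGen Rot _ _)
    | right _ hz =>
      exact ⟨a, node b1 _, rfl, Relation.ReflTransGen.refl,
        Relation.ReflTransGen.single (Rot.right b1 hz)⟩

theorem tle_over_decomp {z x y : PBT} (h : tle z (x.over' y)) :
    ∃ x' y', z = x'.over' y' ∧ tle x' x ∧ tle y' y := by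
  induction h using Relation.ReflTransGen.head_induction_on with
  | refl => exact ⟨x, y, rfl, Relation.ReflTransGen.refl, Relation.ReflTransGen.refl⟩
  | head hzw _ ih =>
    obtain ⟨x', y', hw, hx, hy⟩ := ih
    subst hw
    obtain ⟨x'', y'', rfl, hx', hy'⟩ := rot_over_decomp hzw
    exact ⟨x'', y'', rfl, hx'.trans hx, hy'.trans hy⟩

end PBT

open PBT in
/-- For `x ∈ Y_m` and `y ∈ Y_n`, the map `(x', y') ↦ x'/y'` is a bijection from
`{x' ∈ Y_m : x' ≤ x} × {y' ∈ Y_n : y' ≤ y}` onto `{z ∈ Y_{m+n} : z ≤ x/y}`. -/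
theorem over_bijOn_tamari (m n : ℕ) (x y : PBT) (hx : x.size = m) (hy : y.size = n) :
    Set.BijOn (fun p : PBT × PBT => p.1.over' p.2)
      ({x' : PBT | x'.size = m ∧ tle x' x} ×ˢ {y' : PBT | y'.size = n ∧ tle y' y})
      {z : PBT | z.size = m + n ∧ tle z (x.over' y)} := by
  refine ⟨?_, ?_, ?_⟩
  · rintro ⟨x', y'⟩ ⟨⟨hxs, hxle⟩, ⟨hys, hyle⟩⟩
    exact ⟨by simp [size_over, hxs, hys], hxle.over_mono hyle⟩
  · rintro ⟨x1, y1⟩ ⟨⟨h1s, -⟩, -⟩ ⟨x2, y2⟩ ⟨⟨h2s, -⟩, -⟩ h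
    obtain ⟨h1, h2⟩ := over_inj (h1s.trans h2s.symm) h
    exact Prod.ext h1 h2
  · rintro z ⟨hzs, hzle⟩
    obtain ⟨x', y', rfl, hx', hy'⟩ := tle_over_decomp hzle
    have hx's : x'.size = m := hx'.size_eq.trans hx
    have hy's : y'.size = n := by
      have := size_over x' y'
      omega
    exact ⟨(x', y'), ⟨⟨hx's, hx'⟩, ⟨hy's, hy'⟩⟩, rfl⟩
end

section
/- For all a, b ∈ ℤY one has (S_• ∖ a) * (S_• ∖ b) = S_• ∖ (a * (S_• ∖ b)) + (S_• ∖ a) / (S_• ∖ b). -/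
namespace PBT

theorem tle.refl' (x : PBT) : tle x x := Relation.ReflTransGen.refl

theorem tle.trans' {x y z : PBT} (h1 : tle x y) (h2 : tle y z) : tle x z :=
  Relation.ReflTransGen.trans h1 h2

theorem tle.node_left {a a' : PBT} (b : PBT) (h : tle a a') :
    tle (node a b) (node a' b) :=
  Relation.ReflTransGen.lift (fun t => node t b) (fun _ _ h => Rot.left b h) _ _ h

theorem tle.node_right (a : PBT) {b b' : PBT} (h : tle b b') :
    tle (node a b) (node a b') :=
  Relation.ReflTransGen.lift (fun t => node a t) (fun _ _ h => Rot.right a h) _ _ h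

theorem tle.node {a a' b b' : PBT} (h1 : tle a a') (h2 : tle b b') :
    tle (node a b) (node a' b') :=
  (tle.node_left b h1).trans' (tle.node_right a' h2)

/-- `node u v ≤ u ∖ (node leaf v)`. -/
theorem tle_node_under : ∀ (u v : PBT), tle (node u v) (under u (node leaf v))
  | leaf, v => by simp [under]; exact tle.refl' _
  | node a b, v => by
    have h1 : Rot (node (node a b) v) (node a (node b v)) := Rot.rot a b v
    have h2 : tle (node a (node b v)) (node a (under b (node leaf v))) :=
      tle.node_right a (tle_node_under b v)
    show tle (node (node a b) v) (node a (under b (node leaf v)))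
    exact Relation.ReflTransGen.head h1 h2

/-- Upper set of `node leaf w`. -/
theorem tle_leaf_node {w z : PBT} (h : tle (node leaf w) z) :
    ∃ w', tle w w' ∧ z = node leaf w' := by
  induction h with
  | refl => exact ⟨w, tle.refl' _, rfl⟩
  | tail h₁ step ih =>
    obtain ⟨w', hw, rfl⟩ := ih
    cases step with
    | left _ h' => cases h'
    | right _ h' => exact ⟨_, hw.tail h', rfl⟩

/-- Upper set of `node (node leaf x) y`. -/
theorem tle_LL {x y z : PBT} (h : tle (node (node leaf x) y) z) :
    (∃ x' y', tle x x' ∧ tle y y' ∧ z = node (node leaf x') y') ∨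
    (∃ w, tle (node x y) w ∧ z = node leaf w) := by
  induction h with
  | refl => exact Or.inl ⟨x, y, tle.refl' _, tle.refl' _, rfl⟩
  | tail h₁ step ih =>
    rcases ih with ⟨x', y', hx, hy, rfl⟩ | ⟨w, hw, rfl⟩
    · cases step with
      | rot a b c => exact Or.inr ⟨node x' y', tle.node hx hy, rfl⟩
      | left _ h' =>
        cases h' with
        | left _ h'' => cases h''
        | right _ h'' => exact Or.inl ⟨_, y', hx.tail h'', hy, rfl⟩
      | right _ h' => exact Or.inl ⟨x', _, hx, hy.tail h', rfl⟩
    · cases step with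
      | left _ h' => cases h'
      | right _ h' => exact Or.inr ⟨_, hw.tail h', rfl⟩

/-- The vector of left-subtree sizes, internal vertices in infix order. -/
def V : PBT → List ℕ
  | leaf => []
  | node a b => V a ++ size a :: V b

theorem V_length : ∀ t : PBT, (V t).length = size t
  | leaf => rfl
  | node a b => by simp [V, size, V_length a, V_length b]; omega

theorem V_under : ∀ (a v : PBT), V (under a v) = V a ++ V v
  | leaf, v => by simp [under, V]
  | node a b, v => by simp [under, V, V_under b v]

theorem fge_refl (l : List ℕ) : List.Forall₂ (· ≥ ·) l l :=
  List.forall₂_same.2 fun _ _ => le_refl _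

theorem fge_trans : ∀ {l1 l2 l3 : List ℕ}, List.Forall₂ (· ≥ ·) l1 l2 →
    List.Forall₂ (· ≥ ·) l2 l3 → List.Forall₂ (· ≥ ·) l1 l3
  | _, _, _, List.Forall₂.nil, List.Forall₂.nil => List.Forall₂.nil
  | _, _, _, List.Forall₂.cons h1 t1, List.Forall₂.cons h2 t2 =>
      List.Forall₂.cons (le_trans h2 h1) (fge_trans t1 t2)

theorem fge_sum : ∀ {l1 l2 : List ℕ}, List.Forall₂ (· ≥ ·) l1 l2 → l2.sum ≤ l1.sum
  | _, _, List.Forall₂.nil => le_refl _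
  | _, _, List.Forall₂.cons h t => by
      simp only [List.sum_cons]; exact Nat.add_le_add h (fge_sum t)

theorem fge_split : ∀ {l1 l3 : List ℕ} {l2 l4 : List ℕ},
    List.Forall₂ (· ≥ ·) (l1 ++ l2) (l3 ++ l4) → l1.length = l3.length →
    List.Forall₂ (· ≥ ·) l1 l3 ∧ List.Forall₂ (· ≥ ·) l2 l4
  | [], [], l2, l4, h, _ => ⟨List.Forall₂.nil, h⟩
  | a :: l1, c :: l3, l2, l4, h, hl => by
    rcases h with _ | ⟨h, t⟩
    obtain ⟨h1, h2⟩ := fge_split t (by simpa using hl)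
    exact ⟨List.Forall₂.cons h h1, h2⟩

theorem Rot.V_fge {t t' : PBT} (h : Rot t t') : List.Forall₂ (· ≥ ·) (V t) (V t') := by
  induction h with
  | rot a b c =>
    show List.Forall₂ (· ≥ ·)
      ((V a ++ size a :: V b) ++ (size a + size b + 1) :: V c)
      (V a ++ size a :: (V b ++ size b :: V c))
    rw [List.append_assoc, List.cons_append]
    exact List.rel_append (fge_refl (V a)) (List.Forall₂.cons (le_refl _)
      (List.rel_append (fge_refl (V b)) (List.Forall₂.cons (by omega) (fge_refl (V c)))))
  | @left a a' b h ih =>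
    show List.Forall₂ (· ≥ ·) (V a ++ size a :: V b) (V a' ++ size a' :: V b)
    rw [h.size_eq]
    exact List.rel_append ih (List.Forall₂.cons (le_refl _) (fge_refl (V b)))
  | right a _ ih =>
    exact List.rel_append (fge_refl (V a)) (List.Forall₂.cons (le_refl _) ih)

theorem tle.V_fge {t t' : PBT} (h : tle t t') : List.Forall₂ (· ≥ ·) (V t) (V t') := by
  induction h with
  | refl => exact fge_refl _
  | tail _ step ih => exact fge_trans ih step.V_fge

theorem Rot.V_sum_lt {t t' : PBT} (h : Rot t t') : (V t').sum < (V t).sum := by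
  induction h with
  | rot a b c =>
    show (V a ++ size a :: (V b ++ size b :: V c)).sum <
      ((V a ++ size a :: V b) ++ (size a + size b + 1) :: V c).sum
    simp [List.sum_append]
  | @left a a' b h ih =>
    show (V a' ++ size a' :: V b).sum < (V a ++ size a :: V b).sum
    rw [h.size_eq]
    simp [List.sum_append]
    omega
  | right a _ ih => simp [V, List.sum_append]; omega

theorem tle.V_sum_le {t t' : PBT} (h : tle t t') : (V t').sum ≤ (V t).sum := by
  induction h with
  | refl => exact le_refl _
  | tail _ step ih => exact le_trans (le_of_lt step.V_sum_lt) ih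

theorem tle.eq_of_V_sum {t t' : PBT} (h : tle t t') (hs : (V t).sum ≤ (V t').sum) :
    t = t' := by
  cases h with
  | refl => rfl
  | tail h₁ step =>
    have h2 := step.V_sum_lt
    have h3 := tle.V_sum_le h₁
    omega

/-- The key uniqueness: the only tree of the form `node x' y'` with `x ≤ x'`, `y ≤ y'`
lying below `x ∖ (node leaf y)` is `node x y` itself. -/
theorem key_unique {x y x' y' : PBT} (hx : tle x x') (hy : tle y y')
    (h : tle (node x' y') (under x (node leaf y))) : x' = x ∧ y' = y := by
  have hV := h.V_fge
  rw [V_under] at hV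
  have hV' : List.Forall₂ (· ≥ ·) (V x' ++ size x' :: V y') (V x ++ 0 :: V y) := hV
  obtain ⟨h1, h2⟩ := fge_split hV' (by rw [V_length, V_length, hx.size_eq])
  rcases h2 with _ | ⟨_, h2⟩
  constructor
  · exact (hx.eq_of_V_sum (fge_sum h1)).symm
  · exact (hy.eq_of_V_sum (fge_sum h2)).symm

/-- Characterization of the interval `[(S_•∖x)/(S_•∖y), (S_•∖x)∖(S_•∖y)]`. -/
theorem interval_char (x y z : PBT) :
    (tle (node (node leaf x) y) z ∧ tle z (node leaf (under x (node leaf y)))) ↔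
    (z = node (node leaf x) y ∨
      ∃ w, (tle (node x y) w ∧ tle w (under x (node leaf y))) ∧ z = node leaf w) := by
  constructor
  · rintro ⟨h1, h2⟩
    rcases tle_LL h1 with ⟨x', y', hx, hy, rfl⟩ | ⟨w, hw, rfl⟩
    · rcases tle_LL h2 with ⟨x'', y'', _, _, heq⟩ | ⟨w, hw2, heq⟩
      · exact absurd heq (by simp)
      · injection heq with _ heq'
        subst heq'
        obtain ⟨rfl, rfl⟩ := key_unique hx hy hw2
        exact Or.inl rfl
    · obtain ⟨w', hww', heq⟩ := tle_leaf_node h2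
      injection heq with _ heq'
      subst heq'
      exact Or.inr ⟨w, ⟨hw, hww'⟩, rfl⟩
  · have hstep : tle (node (node leaf x) y) (node leaf (node x y)) :=
      Relation.ReflTransGen.single (Rot.rot leaf x y)
    rintro (rfl | ⟨w, ⟨hw1, hw2⟩, rfl⟩)
    · exact ⟨tle.refl' _, hstep.trans' (tle.node_right leaf (tle_node_under x y))⟩
    · exact ⟨hstep.trans' (tle.node_right leaf hw1), tle.node_right leaf hw2⟩

theorem node_leaf_injective : Function.Injective (node leaf) := by
  intro a b h; injection h

theorem interval_finset (x y : PBT) :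
    (finite_interval (node leaf x) (node leaf y)).toFinset =
      insert (node (node leaf x) y)
        (((finite_interval x (node leaf y)).toFinset).image (node leaf)) := by
  ext z
  simp only [Set.Finite.mem_toFinset, Set.mem_setOf_eq, Finset.mem_insert, Finset.mem_image]
  have e1 : over' (node leaf x) (node leaf y) = node (node leaf x) y := rfl
  have e2 : under (node leaf x) (node leaf y) = node leaf (under x (node leaf y)) := rfl
  have e3 : over' x (node leaf y) = node x y := rfl
  rw [e1, e2, e3, interval_char]
  constructor
  · rintro (h | ⟨w, hw, rfl⟩)
    · exact Or.inl h
    · exact Or.inr ⟨w, hw, rfl⟩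
  · rintro (h | ⟨w, hw, rfl⟩)
    · exact Or.inl h
    · exact Or.inr ⟨w, hw, rfl⟩

end PBT

namespace PBT

theorem bilin_zero_left (f : PBT → PBT → ZY) (b : ZY) : bilin f 0 b = 0 := by
  simp [bilin, Finsupp.sum_zero_index]

theorem bilin_zero_right (f : PBT → PBT → ZY) (a : ZY) : bilin f a 0 = 0 := by
  simp [bilin, Finsupp.sum_zero_index, Finsupp.sum]

theorem bilin_add_left (f : PBT → PBT → ZY) (a a' b : ZY) :
    bilin f (a + a') b = bilin f a b + bilin f a' b := by
  unfold bilin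
  rw [Finsupp.sum_add_index']
  · intro x
    simp [Finsupp.sum]
  · intro x r s
    rw [← Finsupp.sum_add]
    apply Finsupp.sum_congr
    intro y _
    rw [add_mul, add_smul]

theorem bilin_add_right (f : PBT → PBT → ZY) (a b b' : ZY) :
    bilin f a (b + b') = bilin f a b + bilin f a b' := by
  unfold bilin
  rw [← Finsupp.sum_add]
  apply Finsupp.sum_congr
  intro x _
  rw [Finsupp.sum_add_index']
  · intro y; simp
  · intro y r s; rw [mul_add, add_smul]

theorem bilin_single_single (f : PBT → PBT → ZY) (x y : PBT) (r s : ℤ) :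
    bilin f (Finsupp.single x r) (Finsupp.single y s) = (r * s) • f x y := by
  unfold bilin
  rw [Finsupp.sum_single_index, Finsupp.sum_single_index] <;> simp [Finsupp.sum]

theorem bilin_sum_right (f : PBT → PBT → ZY) (a : ZY) (T : Finset PBT) (g : PBT → ZY) :
    bilin f a (∑ z ∈ T, g z) = ∑ z ∈ T, bilin f a (g z) := by
  classical
  induction T using Finset.induction_on with
  | empty => simp [bilin_zero_right]
  | insert _ _ h ih => rw [Finset.sum_insert h, Finset.sum_insert h, bilin_add_right, ih]

theorem underM_sum (T : Finset PBT) (g : PBT → ZY) :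
    underM (S dot) (∑ z ∈ T, g z) = ∑ z ∈ T, underM (S dot) (g z) :=
  bilin_sum_right _ _ T g

theorem underM_dot_single (t : PBT) (r : ℤ) :
    underM (S dot) (Finsupp.single t r) = Finsupp.single (node leaf t) r := by
  unfold underM
  rw [show (S dot : ZY) = Finsupp.single dot 1 from rfl, bilin_single_single]
  show (1 * r) • S (under (node leaf leaf) t) = _
  rw [show under (node leaf leaf) t = node leaf t from rfl]
  simp [S, Finsupp.smul_single]

theorem underM_dot_S (t : PBT) : underM (S dot) (S t) = S (node leaf t) :=
  underM_dot_single t 1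

/-- The basis case of the dendriform lemma. -/
theorem starB_base (x y : PBT) :
    starB (node leaf x) (node leaf y) =
      underM (S dot) (starB x (node leaf y)) + S (node (node leaf x) y) := by
  unfold starB
  rw [interval_finset, Finset.sum_insert, underM_sum]
  · rw [Finset.sum_image (fun a _ b _ h => node_leaf_injective h)]
    rw [add_comm]
    congr 1
    apply Finset.sum_congr rfl
    intro w _
    exact (underM_dot_S w).symm
  · simp only [Finset.mem_image]
    rintro ⟨w, _, h⟩
    injection h with h1
    exact absurd h1 (by simp)

end PBT

namespace PBT

theorem bilin_smul_right (f : PBT → PBT → ZY) (a : ZY) (r : ℤ) (b : ZY) :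
    bilin f a (r • b) = r • bilin f a b := by
  unfold bilin
  rw [Finsupp.smul_sum]
  apply Finsupp.sum_congr
  intro x _
  rw [Finsupp.sum_smul_index fun y => by simp, Finsupp.smul_sum]
  apply Finsupp.sum_congr
  intro y _
  rw [smul_smul]
  congr 1
  ring

theorem underM_add (c b b' : ZY) : underM c (b + b') = underM c b + underM c b' :=
  bilin_add_right _ _ _ _

theorem underM_zero (c : ZY) : underM c 0 = 0 := bilin_zero_right _ _

theorem underM_smul (c : ZY) (r : ℤ) (b : ZY) : underM c (r • b) = r • underM c b :=
  bilin_smul_right _ _ _ _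

theorem starM_add_left (a a' b : ZY) : starM (a + a') b = starM a b + starM a' b :=
  bilin_add_left _ _ _ _

theorem starM_add_right (a b b' : ZY) : starM a (b + b') = starM a b + starM a b' :=
  bilin_add_right _ _ _ _

theorem starM_zero_left (b : ZY) : starM 0 b = 0 := bilin_zero_left _ _

theorem starM_zero_right (a : ZY) : starM a 0 = 0 := bilin_zero_right _ _

theorem overM_add_left (a a' b : ZY) : overM (a + a') b = overM a b + overM a' b :=
  bilin_add_left _ _ _ _

theorem overM_add_right (a b b' : ZY) : overM a (b + b') = overM a b + overM a b' :=
  bilin_add_right _ _ _ _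

theorem overM_zero_left (b : ZY) : overM 0 b = 0 := bilin_zero_left _ _

theorem overM_zero_right (a : ZY) : overM a 0 = 0 := bilin_zero_right _ _

theorem starM_single_single (x y : PBT) (r s : ℤ) :
    starM (Finsupp.single x r) (Finsupp.single y s) = (r * s) • starB x y :=
  bilin_single_single _ _ _ _ _

theorem overM_single_single (x y : PBT) (r s : ℤ) :
    overM (Finsupp.single x r) (Finsupp.single y s) = (r * s) • S (over' x y) :=
  bilin_single_single _ _ _ _ _

end PBT

open PBT in
/-- `(S_• ∖ a) * (S_• ∖ b) = S_• ∖ (a * (S_• ∖ b)) + (S_• ∖ a) / (S_• ∖ b)`. -/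
theorem dendriform_lemma (a b : ZY) :
    starM (underM (S dot) a) (underM (S dot) b) =
      underM (S dot) (starM a (underM (S dot) b))
        + overM (underM (S dot) a) (underM (S dot) b) := by
  induction a using Finsupp.induction_linear with
  | zero =>
    rw [underM_zero, starM_zero_left, underM_zero, overM_zero_left, add_zero]
  | add f g hf hg =>
    rw [underM_add, starM_add_left, starM_add_left, underM_add, overM_add_left, hf, hg]
    abel
  | single x r =>
    induction b using Finsupp.induction_linear with
    | zero =>
      rw [underM_zero, starM_zero_right, starM_zero_right, underM_zero, overM_zero_right,
        add_zero]
    | add f g hf hg =>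
      rw [underM_add, starM_add_right, starM_add_right, underM_add, overM_add_right, hf, hg]
      abel
    | single y s =>
      rw [underM_dot_single, underM_dot_single, starM_single_single, starM_single_single,
        underM_smul, overM_single_single]
      rw [show over' (node leaf x) (node leaf y) = node (node leaf x) y from rfl]
      rw [starB_base x y, smul_add]
end
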